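/- Let Σ be a real d×d matrix with trace zero that is diagonalizable over ℝ (i.e. similar to a real diagonal matrix), and let β : [s,t] → ℝ be continuous. Then det(∫_s^t exp((β(u)−β(s))·Σ) du) ≥ (t−s)^d. -/

import Mathlib

open MeasureTheory

attribute [local instance] Matrix.linftyOpNormedAddCommGroup Matrix.linftyOpNormedRing
  Matrix.linftyOpNormedAlgebra

lemma jensen_exp (s t : ℝ) (hst : s < t) (g : ℝ → ℝ) (hg : Continuous g) :
    (t - s) * Real.exp ((t - s)⁻¹ * ∫ u in s..t, g u) ≤ ∫ u in s..t, Real.exp (g u) := by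
  have hts : (0:ℝ) < t - s := sub_pos.2 hst
  set μ : Measure ℝ := volume.restrict (Set.Ioc s t) with hμ
  have hμuniv : μ Set.univ = ENNReal.ofReal (t - s) := by
    rw [hμ, Measure.restrict_apply_univ, Real.volume_Ioc]
  haveI : IsFiniteMeasure μ := ⟨by rw [hμuniv]; exact ENNReal.ofReal_lt_top⟩
  haveI : NeZero μ := ⟨by
    intro h
    rw [h] at hμuniv
    simp only [Measure.coe_zero, Pi.zero_apply] at hμuniv
    exact absurd hμuniv.symm (by simp [ENNReal.ofReal_eq_zero, not_le]; exact hst)⟩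
  have hint1 : Integrable g μ := hg.integrableOn_Ioc
  have hint2 : Integrable (Real.exp ∘ g) μ := (Real.continuous_exp.comp hg).integrableOn_Ioc
  have h := (convexOn_exp).map_average_le Real.continuous_exp.continuousOn isClosed_univ
    (Filter.Eventually.of_forall fun _ => trivial) hint1 hint2
  rw [average_eq, average_eq, measureReal_def, hμuniv, ENNReal.toReal_ofReal hts.le, smul_eq_mul, smul_eq_mul] at h
  have h1 : (∫ u in s..t, g u) = ∫ x, g x ∂μ := intervalIntegral.integral_of_le hst.le
  have h2 : (∫ u in s..t, Real.exp (g u)) = ∫ x, Real.exp (g x) ∂μ :=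
    intervalIntegral.integral_of_le hst.le
  rw [h1, h2]
  calc (t - s) * Real.exp ((t - s)⁻¹ * ∫ x, g x ∂μ)
      ≤ (t - s) * ((t - s)⁻¹ * ∫ x, Real.exp (g x) ∂μ) := by
        exact mul_le_mul_of_nonneg_left h hts.le
    _ = ∫ x, Real.exp (g x) ∂μ := by field_simp


/-- For a trace-free real d×d matrix `M` that is diagonalizable over ℝ and a continuous
function β, the determinant of `∫_s^t exp((β(u)−β(s))·M) du` is at least `(t−s)^d`. -/
theorem det_integral_matrixExp_ge (d : ℕ) (hd : 1 ≤ d)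
    (M : Matrix (Fin d) (Fin d) ℝ) (htr : Matrix.trace M = 0)
    (hdiag : ∃ (P : Matrix (Fin d) (Fin d) ℝ) (_ : IsUnit P.det) (D : Fin d → ℝ),
        M = P * Matrix.diagonal D * P⁻¹)
    (s t : ℝ) (hst : s < t) (β : ℝ → ℝ) (hβ : Continuous β) :
    (t - s) ^ d ≤ (∫ u in s..t, NormedSpace.exp ((β u - β s) • M)).det := by
  obtain ⟨P, hP, D, rfl⟩ := hdiag
  have hts : (0:ℝ) < t - s := sub_pos.2 hst
  -- trace of D is 0
  have htrD : ∑ i, D i = 0 := by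
    have : Matrix.trace (P * Matrix.diagonal D * P⁻¹) = Matrix.trace (Matrix.diagonal D) := by
      rw [Matrix.trace_mul_cycle, Matrix.nonsing_inv_mul P hP, one_mul]
    rw [this, Matrix.trace_diagonal] at htr
    exact htr
  -- the diagonalized integrand
  set G : ℝ → Matrix (Fin d) (Fin d) ℝ :=
    fun u => Matrix.diagonal (fun i => Real.exp ((β u - β s) * D i)) with hG
  have key : ∀ u, NormedSpace.exp ((β u - β s) • (P * Matrix.diagonal D * P⁻¹))
      = P * G u * P⁻¹ := by
    intro u
    have h1 : (β u - β s) • (P * Matrix.diagonal D * P⁻¹)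
        = P * ((β u - β s) • Matrix.diagonal D) * P⁻¹ := by
      rw [mul_smul_comm, smul_mul_assoc]
    have h2 : (β u - β s) • Matrix.diagonal D
        = Matrix.diagonal (fun i => (β u - β s) * D i) := by
      ext i j
      by_cases h : i = j
      · subst h; simp [Matrix.diagonal_apply_eq]
      · simp [Matrix.diagonal_apply_ne _ h, Matrix.smul_apply]
    rw [h1, h2, Matrix.exp_conj _ _ ((Matrix.isUnit_iff_isUnit_det P).mpr hP), Matrix.exp_diagonal]
    have h3 : (NormedSpace.exp fun i => (β u - β s) * D i)
        = fun i => Real.exp ((β u - β s) * D i) := by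
      funext i
      rw [Pi.coe_exp, Real.exp_eq_exp_ℝ]
    rw [hG, h3]
  simp only [key]
  -- continuity and integrability of G
  have hGcont : Continuous G := by
    apply Continuous.matrix_diagonal
    exact continuous_pi fun i =>
      Real.continuous_exp.comp ((hβ.sub continuous_const).mul continuous_const)
  have hGint := hGcont.intervalIntegrable (μ := volume) s t
  -- pull out the conjugation
  have hL : (∫ u in s..t, P * G u * P⁻¹) = P * (∫ u in s..t, G u) * P⁻¹ := by
    let L : Matrix (Fin d) (Fin d) ℝ →L[ℝ] Matrix (Fin d) (Fin d) ℝ :=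
      LinearMap.toContinuousLinearMap
        ((LinearMap.mulRight ℝ P⁻¹).comp (LinearMap.mulLeft ℝ P))
    have := L.intervalIntegral_comp_comm hGint
    exact this
  rw [hL, Matrix.det_conj ((Matrix.isUnit_iff_isUnit_det P).mpr hP)]
  -- compute the integral of the diagonal matrix
  have hEntry : ∀ (i j : Fin d), (∫ u in s..t, G u) i j = ∫ u in s..t, G u i j := by
    intro i j
    let E : Matrix (Fin d) (Fin d) ℝ →L[ℝ] ℝ :=
      LinearMap.toContinuousLinearMap
        { toFun := fun A => A i j
          map_add' := fun _ _ => rfl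
          map_smul' := fun _ _ => rfl }
    have := E.intervalIntegral_comp_comm hGint
    exact this.symm
  have hdiagInt : (∫ u in s..t, G u)
      = Matrix.diagonal (fun i => ∫ u in s..t, Real.exp ((β u - β s) * D i)) := by
    ext i j
    rw [hEntry i j]
    by_cases h : i = j
    · subst h; simp [hG, Matrix.diagonal_apply_eq]
    · simp [hG, Matrix.diagonal_apply_ne _ h]
  rw [hdiagInt, Matrix.det_diagonal]
  -- the scalar inequality
  have hjen : ∀ i : Fin d,
      (t - s) * Real.exp ((t - s)⁻¹ * ∫ u in s..t, (β u - β s) * D i)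
        ≤ ∫ u in s..t, Real.exp ((β u - β s) * D i) := fun i =>
    jensen_exp s t hst _ ((hβ.sub continuous_const).mul continuous_const)
  have hprod : ∏ i : Fin d,
      ((t - s) * Real.exp ((t - s)⁻¹ * ∫ u in s..t, (β u - β s) * D i)) = (t - s) ^ d := by
    rw [Finset.prod_mul_distrib, Finset.prod_const, Finset.card_univ, Fintype.card_fin,
      ← Real.exp_sum]
    have hzero : ∑ i : Fin d, (t - s)⁻¹ * ∫ u in s..t, (β u - β s) * D i = 0 := by
      simp only [intervalIntegral.integral_mul_const]
      rw [← Finset.mul_sum, ← Finset.mul_sum, htrD, mul_zero, mul_zero]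
    rw [hzero, Real.exp_zero, mul_one]
  calc (t - s) ^ d
      = ∏ i : Fin d, ((t - s) * Real.exp ((t - s)⁻¹ * ∫ u in s..t, (β u - β s) * D i)) :=
        hprod.symm
    _ ≤ ∏ i : Fin d, ∫ u in s..t, Real.exp ((β u - β s) * D i) :=
        Finset.prod_le_prod (fun i _ => mul_nonneg hts.le (Real.exp_nonneg _))
          (fun i _ => hjen i)
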